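/- (First Reflection Theorem) Let X be a Polish space and let Φ be a collection of subsets of X that is Π¹₁ on Σ¹₁. Then for every analytic set A ⊆ X with A ∈ Φ there is a Borel set B ⊆ X with A ⊆ B and B ∈ Φ. -/

import Mathlib

open MeasureTheory

namespace FirstRefl

open Set

/-- The list `[z 0, ..., z (k-1)]`. -/
def seg (z : ℕ → ℕ) (k : ℕ) : List ℕ := (List.range k).map z

lemma seg_length (z : ℕ → ℕ) (k : ℕ) : (seg z k).length = k := by simp [seg]

lemma seg_zero (z : ℕ → ℕ) : seg z 0 = [] := rfl

lemma seg_succ (z : ℕ → ℕ) (k : ℕ) : seg z (k+1) = seg z k ++ [z k] := by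
  simp [seg, List.range_succ]

lemma seg_getElem (z : ℕ → ℕ) {k i : ℕ} (h : i < (seg z k).length) :
    (seg z k)[i] = z i := by
  simp [seg]

lemma seg_prefix (z : ℕ → ℕ) {k l : ℕ} (h : k ≤ l) : seg z k <+: seg z l := by
  induction l with
  | zero => simp_all [seg]
  | succ n ih =>
    rcases Nat.lt_or_ge k (n+1) with h' | h'
    · exact (ih (Nat.lt_succ_iff.1 h')).trans (by rw [seg_succ]; exact List.prefix_append _ _)
    · have : k = n + 1 := le_antisymm h h'
      subst this; exact List.prefix_refl _

lemma seg_mono_cons (z : ℕ → ℕ) (k : ℕ) :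
    seg z (k+1) = z 0 :: seg (fun i => z (i+1)) k := by
  simp [seg, List.range_succ_eq_map, Function.comp_def]

lemma seg_getD (z : ℕ → ℕ) {k i : ℕ} (h : i < k) : (seg z k).getD i 0 = z i := by
  rw [List.getD_eq_getElem _ _ (by simpa [seg_length] using h)]
  exact seg_getElem z _

lemma getD_of_prefix {l l' : List ℕ} (h : l <+: l') {i : ℕ} (hi : i < l.length) :
    l.getD i 0 = l'.getD i 0 := by
  rw [List.getD_eq_getElem _ _ hi, List.getD_eq_getElem _ _ (lt_of_lt_of_le hi h.length_le)]
  exact h.getElem hi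

lemma seg_map (F : ℕ → ℕ) (z : ℕ → ℕ) (k : ℕ) : (seg z k).map F = seg (F ∘ z) k := by
  simp [seg, List.map_map]

/-- A tree: a prefix-closed set of finite sequences. -/
def IsTree (S : Set (List ℕ)) : Prop := ∀ t ∈ S, ∀ p, p <+: t → p ∈ S

/-- `S` has an infinite branch. -/
def HasBranch (S : Set (List ℕ)) : Prop := ∃ z : ℕ → ℕ, ∀ k, seg z k ∈ S

/-- From a prefix-chain of lists of growing length, extract an infinite sequence whose
initial segments are prefixes of the chain. -/
lemma exists_branch_of_chain (u : ℕ → List ℕ) (hmono : ∀ k, u k <+: u (k+1))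
    (hlen : ∀ k, k ≤ (u k).length) : ∃ z : ℕ → ℕ, ∀ k, seg z k <+: u k := by
  have hchain : ∀ i j, i ≤ j → u i <+: u j := by
    intro i j hij
    induction j with
    | zero => simp_all
    | succ n ih =>
      rcases Nat.lt_or_ge i (n+1) with h' | h'
      · exact (ih (Nat.lt_succ_iff.1 h')).trans (hmono n)
      · have : i = n + 1 := le_antisymm hij h'
        subst this; exact List.prefix_refl _
  refine ⟨fun j => (u (j+1)).getD j 0, fun k => ?_⟩
  have hlen' : ∀ {j m : ℕ}, j < m → j < (u m).length := fun {j m} h =>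
    lt_of_lt_of_le h (hlen m)
  have : seg (fun j => (u (j+1)).getD j 0) k = (u k).take k := by
    apply List.ext_getElem
    · simp [seg_length, Nat.le_antisymm (Nat.min_le_left _ _)
        (le_min le_rfl (hlen k))]
    · intro i h1 h2
      rw [seg_getElem]
      rw [List.getElem_take]
      have hi : i < k := by simpa [seg_length] using h1
      have hiu : i < (u (i+1)).length := hlen' (Nat.lt_succ_self i)
      rw [List.getD_eq_getElem _ _ hiu]
      exact (hchain (i+1) k hi).getElem hiu
  rw [this]
  exact List.take_prefix _ _

section Space

variable {X : Type} [TopologicalSpace X]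

/-- Basic clopen cylinder in `ℕ → ℕ`. -/
def cyl (t : List ℕ) : Set (ℕ → ℕ) := {z | seg z t.length = t}

lemma self_mem_cyl (z : ℕ → ℕ) (k : ℕ) : z ∈ cyl (seg z k) := by
  simp [cyl, seg_length]

lemma cyl_anti {t t' : List ℕ} (h : t <+: t') : cyl t' ⊆ cyl t := by
  intro z hz
  have h1 : seg z t.length <+: seg z t'.length := seg_prefix z h.length_le
  rw [hz] at h1
  have e1 : seg z t.length = t'.take (seg z t.length).length :=
    List.prefix_iff_eq_take.1 h1
  have e2 : t = t'.take t.length := List.prefix_iff_eq_take.1 h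
  show seg z t.length = t
  rw [e1, seg_length, ← e2]

/-- Cylinders around `z` form a neighborhood basis. -/
lemma exists_cyl_subset {U : Set (ℕ → ℕ)} (hU : IsOpen U) {z : ℕ → ℕ} (hz : z ∈ U) :
    ∃ k, cyl (seg z k) ⊆ U := by
  obtain ⟨I, u, hu, hsub⟩ := isOpen_pi_iff.1 hU z hz
  rcases I.eq_empty_or_nonempty with h | h
  · exact ⟨0, fun y _ => hsub (by simp [h])⟩
  · obtain ⟨m, hm⟩ := I.exists_le
    refine ⟨m + 1, fun y hy => hsub ?_⟩
    intro i hi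
    have hiI : i ∈ I := hi
    have him : i < m + 1 := Nat.lt_succ_of_le (hm i hiI)
    have : y i = z i := by
      have hy' := hy
      simp only [cyl, mem_setOf_eq, seg_length] at hy'
      have h1 : (seg y (m+1))[i]'(by simp [seg_length, him]) =
          (seg z (m+1))[i]'(by simp [seg_length, him]) :=
        List.getElem_of_eq hy' _
      rwa [seg_getElem, seg_getElem] at h1
    rw [this]
    exact (hu i hiI).2

variable (f : (ℕ → ℕ) → X)

/-- Closure of the image of a cylinder. -/
def Cl (t : List ℕ) : Set X := closure (f '' cyl t)

lemma isClosed_Cl (t : List ℕ) : IsClosed (Cl f t) := isClosed_closure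

lemma Cl_anti {t t' : List ℕ} (h : t <+: t') : Cl f t' ⊆ Cl f t :=
  closure_mono (image_mono (cyl_anti h))

/-- Characterization of membership in `range f` through the tree of cylinder closures. -/
lemma mem_range_iff_branch [PolishSpace X] (fc : Continuous f) (x : X) :
    x ∈ range f ↔ ∃ z : ℕ → ℕ, ∀ k, x ∈ Cl f (seg z k) := by
  constructor
  · rintro ⟨z, rfl⟩
    exact ⟨z, fun k => subset_closure ⟨z, self_mem_cyl z k, rfl⟩⟩
  · rintro ⟨z, hz⟩
    letI := TopologicalSpace.upgradeIsCompletelyMetrizable X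
    refine ⟨z, ?_⟩
    have key : ∀ ε > (0:ℝ), dist x (f z) ≤ ε := by
      intro ε hε
      obtain ⟨k, hk⟩ := exists_cyl_subset
        (Metric.isOpen_ball.preimage fc) (by
          show z ∈ f ⁻¹' Metric.ball (f z) ε
          simp [hε])
      have h1 : f '' cyl (seg z k) ⊆ Metric.ball (f z) ε := by
        rintro _ ⟨y, hy, rfl⟩
        exact hk hy
      have h2 : x ∈ closure (Metric.ball (f z) ε) :=
        closure_mono h1 (hz k)
      have := Metric.closure_ball_subset_closedBall h2
      simpa [Metric.mem_closedBall] using this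
    have hd : dist x (f z) ≤ 0 := le_of_forall_gt_imp_ge_of_dense (by
      intro ε hε
      exact key ε hε)
    have hxz : x = f z := dist_eq_zero.1 (le_antisymm hd dist_nonneg)
    rw [hxz]

/-- A monotone, length preserving map on finite sequences. -/
def IsGood (h : List ℕ → List ℕ) : Prop :=
  (∀ t, (h t).length = t.length) ∧ ∀ t t', t <+: t' → h t <+: h t'

/-- The set of `x` such that the tree `S` maps monotonically into the tree
`{t | x ∈ Cl f t}`. -/
def Msets (S : Set (List ℕ)) : Set X :=
  {x | ∃ h : List ℕ → List ℕ, IsGood h ∧ ∀ t ∈ S, x ∈ Cl f (h t)}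

lemma range_subset_Msets [PolishSpace X] (fc : Continuous f) (S : Set (List ℕ)) :
    range f ⊆ Msets f S := by
  rintro x ⟨z, rfl⟩
  refine ⟨fun t => seg z t.length, ⟨fun t => seg_length z _, fun t t' h => seg_prefix z h.length_le⟩,
    fun t _ => subset_closure ⟨z, self_mem_cyl z _, rfl⟩⟩

lemma Msets_subset_range [PolishSpace X] (fc : Continuous f) {S : Set (List ℕ)}
    (hS : HasBranch S) : Msets f S ⊆ range f := by
  obtain ⟨z, hz⟩ := hS
  rintro x ⟨h, ⟨hlen, hmono⟩, hx⟩
  rw [mem_range_iff_branch f fc]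
  have hchain : ∀ k, h (seg z k) <+: h (seg z (k+1)) :=
    fun k => hmono _ _ (seg_prefix z (Nat.le_succ k))
  obtain ⟨z', hz'⟩ := exists_branch_of_chain (fun k => h (seg z k)) hchain
    (fun k => by rw [hlen, seg_length])
  refine ⟨z', fun k => ?_⟩
  have : seg z' k = h (seg z k) :=
    (hz' k).eq_of_length (by rw [seg_length, hlen, seg_length])
  rw [this]
  exact hx _ (hz k)

/-- The child relation of a tree. -/
def childRel (S : Set (List ℕ)) : List ℕ → List ℕ → Prop :=
  fun a b => a ∈ S ∧ ∃ n, a = b ++ [n]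

lemma wf_childRel_of_not_hasBranch {S : Set (List ℕ)} (hT : IsTree S)
    (h : ¬ HasBranch S) : WellFounded (childRel S) := by
  by_contra hwf
  apply h
  obtain ⟨a0, ha0⟩ : ∃ a, ¬ Acc (childRel S) a := by
    by_contra h'
    push_neg at h'
    exact hwf ⟨h'⟩
  have step : ∀ a, ¬ Acc (childRel S) a → ∃ b, childRel S b a ∧ ¬ Acc (childRel S) b := by
    intro a ha
    by_contra h'
    push_neg at h'
    exact ha (Acc.intro a h')
  classical
  choose nxt hnxt1 hnxt2 using step
  let nxt' : List ℕ → List ℕ := fun a =>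
    if h : ¬ Acc (childRel S) a then nxt a h else []
  let u : ℕ → List ℕ := fun k => nxt'^[k] a0
  have hAccu : ∀ k, ¬ Acc (childRel S) (u k) := by
    intro k
    induction k with
    | zero => exact ha0
    | succ n ih =>
      show ¬ Acc (childRel S) (nxt'^[n+1] a0)
      rw [Function.iterate_succ_apply']
      show ¬ Acc (childRel S) (nxt' (u n))
      simp only [nxt', dif_pos ih]
      exact hnxt2 _ ih
  have hrel : ∀ k, childRel S (u (k+1)) (u k) := by
    intro k
    show childRel S (nxt'^[k+1] a0) (u k)
    rw [Function.iterate_succ_apply']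
    show childRel S (nxt' (u k)) (u k)
    simp only [nxt', dif_pos (hAccu k)]
    exact hnxt1 _ (hAccu k)
  have hmono : ∀ k, u k <+: u (k+1) := by
    intro k
    obtain ⟨_, n, hn⟩ := hrel k
    rw [hn]
    exact List.prefix_append _ _
  have hlen : ∀ k, k ≤ (u k).length := by
    intro k
    induction k with
    | zero => exact Nat.zero_le _
    | succ n ih =>
      obtain ⟨_, m, hm⟩ := hrel n
      rw [hm]
      simp only [List.length_append, List.length_cons, List.length_nil]
      omega
  obtain ⟨z, hz⟩ := exists_branch_of_chain u hmono hlen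
  refine ⟨z, fun k => ?_⟩
  exact hT _ (hrel k).1 _ ((hz k).trans (hmono k))

/-- The canonical transfinite "derivative" sets, defined by recursion along a
well-founded tree. -/
noncomputable def G {S : Set (List ℕ)} (hwf : WellFounded (childRel S)) :
    List ℕ → List ℕ → Set X :=
  hwf.fix (C := fun _ => List ℕ → Set X)
    (fun s ih u =>
      Cl f u ∩ ⋂ (n : ℕ) (hn : s ++ [n] ∈ S), ⋃ (m : ℕ), ih (s ++ [n]) ⟨hn, n, rfl⟩ (u ++ [m]))

lemma G_eq {S : Set (List ℕ)} (hwf : WellFounded (childRel S)) (s u : List ℕ) :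
    G f hwf s u = Cl f u ∩ ⋂ (n : ℕ) (hn : s ++ [n] ∈ S), ⋃ (m : ℕ),
      G f hwf (s ++ [n]) (u ++ [m]) := by
  show (hwf.fix (C := fun _ => List ℕ → Set X) _) s u = _
  rw [WellFounded.fix_eq]
  rfl

/-- Helper for recursive construction of a good map: `buildH pick` is the map sending
`[]` to `[]` and `s ++ [n]` to `buildH pick s ++ [pick s n (buildH pick s)]`. -/
noncomputable def buildHAux (pick : List ℕ → ℕ → List ℕ → ℕ) : List ℕ → List ℕ
  | [] => []
  | n :: rs => buildHAux pick rs ++ [pick rs.reverse n (buildHAux pick rs)]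

noncomputable def buildH (pick : List ℕ → ℕ → List ℕ → ℕ) (t : List ℕ) : List ℕ :=
  buildHAux pick t.reverse

lemma buildH_nil (pick : List ℕ → ℕ → List ℕ → ℕ) : buildH pick [] = [] := rfl

lemma buildH_snoc (pick : List ℕ → ℕ → List ℕ → ℕ) (s : List ℕ) (n : ℕ) :
    buildH pick (s ++ [n]) = buildH pick s ++ [pick s n (buildH pick s)] := by
  unfold buildH
  rw [List.reverse_append]
  simp [buildHAux]

lemma buildH_length (pick : List ℕ → ℕ → List ℕ → ℕ) (t : List ℕ) :
    (buildH pick t).length = t.length := by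
  induction t using List.reverseRecOn with
  | nil => rfl
  | append_singleton l a ih => rw [buildH_snoc]; simp [ih]

lemma isGood_buildH (pick : List ℕ → ℕ → List ℕ → ℕ) : IsGood (buildH pick) := by
  refine ⟨buildH_length pick, fun t t' htt' => ?_⟩
  induction t' using List.reverseRecOn with
  | nil =>
    rw [List.prefix_nil] at htt'
    subst htt'
    exact List.prefix_refl _
  | append_singleton l a ih =>
    rcases List.prefix_concat_iff.1 htt' with h | h
    · subst h; exact List.prefix_refl _
    · exact (ih h).trans (by rw [buildH_snoc]; exact List.prefix_append _ _)

lemma snoc_of_prefix_length {l l' : List ℕ} (h : l <+: l') (hl : l'.length = l.length + 1) :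
    ∃ a, l' = l ++ [a] := by
  obtain ⟨r, rfl⟩ := h
  rw [List.length_append] at hl
  have : r.length = 1 := by omega
  obtain ⟨a, rfl⟩ := List.length_eq_one_iff.1 this
  exact ⟨a, rfl⟩

lemma Msets_eq_G {S : Set (List ℕ)} (hT : IsTree S) (hwf : WellFounded (childRel S))
    (hnil : [] ∈ S) : Msets f S = {x | x ∈ G f hwf [] []} := by
  classical
  ext x
  constructor
  · rintro ⟨h, ⟨hlen, hmono⟩, hx⟩
    have claim : ∀ s, s ∈ S → x ∈ G f hwf s (h s) := by
      intro s
      induction s using hwf.induction with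
      | _ s ih =>
        intro hs
        rw [G_eq]
        refine ⟨hx s hs, ?_⟩
        refine mem_iInter.2 fun n => mem_iInter.2 fun hn => ?_
        have hpre : h s <+: h (s ++ [n]) := hmono _ _ (List.prefix_append _ _)
        obtain ⟨m, hm⟩ := snoc_of_prefix_length hpre (by rw [hlen, hlen]; simp)
        refine mem_iUnion.2 ⟨m, ?_⟩
        rw [← hm]
        exact ih (s ++ [n]) ⟨hn, n, rfl⟩ hn
    have h0 : h [] = [] := List.length_eq_zero_iff.1 (hlen [])
    have := claim [] hnil
    rwa [h0] at this
  · intro hx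
    let pick : List ℕ → ℕ → List ℕ → ℕ := fun s n u =>
      if hex : ∃ m, x ∈ G f hwf (s ++ [n]) (u ++ [m]) then hex.choose else 0
    have inv : ∀ t ∈ S, x ∈ G f hwf t (buildH pick t) := by
      intro t
      induction t using List.reverseRecOn with
      | nil => intro _; rw [buildH_nil]; exact hx
      | append_singleton s n ih =>
        intro hsn
        have hs : s ∈ S := hT _ hsn _ (List.prefix_append _ _)
        have ihs := ih hs
        rw [G_eq] at ihs
        have h2 := ihs.2
        rw [mem_iInter] at h2
        have h3 := mem_iInter.1 (h2 n) hsn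
        have hex : ∃ m, x ∈ G f hwf (s ++ [n]) (buildH pick s ++ [m]) := mem_iUnion.1 h3
        rw [buildH_snoc]
        show x ∈ G f hwf (s ++ [n]) (buildH pick s ++ [pick s n (buildH pick s)])
        have : pick s n (buildH pick s) = hex.choose := dif_pos hex
        rw [this]
        exact hex.choose_spec
    refine ⟨buildH pick, isGood_buildH pick, fun t ht => ?_⟩
    have := inv t ht
    rw [G_eq] at this
    exact this.1

variable [MeasurableSpace X] [BorelSpace X]

lemma measurableSet_G {S : Set (List ℕ)} (hwf : WellFounded (childRel S)) :
    ∀ s u, MeasurableSet (G f hwf s u) := by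
  intro s
  induction s using hwf.induction with
  | _ s ih =>
    intro u
    rw [G_eq]
    refine ((isClosed_Cl f u).measurableSet).inter ?_
    exact MeasurableSet.iInter fun n => MeasurableSet.iInter fun hn =>
      MeasurableSet.iUnion fun m => ih (s ++ [n]) ⟨hn, n, rfl⟩ (u ++ [m])

lemma measurableSet_Msets [PolishSpace X] {S : Set (List ℕ)} (hT : IsTree S)
    (h : ¬ HasBranch S) : MeasurableSet (Msets f S) := by
  have hwf := wf_childRel_of_not_hasBranch hT h
  by_cases hnil : [] ∈ S
  · rw [Msets_eq_G f hT hwf hnil]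
    exact measurableSet_G f hwf [] []
  · have hSempty : S = ∅ := by
      ext t
      simp only [mem_empty_iff_false, iff_false]
      intro ht
      exact hnil (hT t ht [] List.nil_prefix)
    have : Msets f S = univ := by
      ext x
      simp only [mem_univ, iff_true]
      refine ⟨id, ⟨fun t => rfl, fun t t' h' => h'⟩, fun t ht => ?_⟩
      rw [hSempty] at ht
      exact absurd ht (notMem_empty t)
    rw [this]
    exact MeasurableSet.univ

/-- Decoding of a code `w : ℕ → ℕ` into a tree. -/
def Scode (w : ℕ → ℕ) : Set (List ℕ) :=
  {t | ∀ p, p <+: t → w (Encodable.encode p) = 0}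

lemma isTree_Scode (w : ℕ → ℕ) : IsTree (Scode w) :=
  fun _t ht p hp q hq => ht q (hq.trans hp)

/-- Decoding a function `ℕ → ℕ` into a map on finite sequences. -/
def Hfun (h' : ℕ → ℕ) (t : List ℕ) : List ℕ :=
  ((Encodable.decode (h' (Encodable.encode t)) : Option (List ℕ))).getD []

lemma Hfun_lift (h : List ℕ → List ℕ) :
    Hfun (fun k => Encodable.encode (h (((Encodable.decode k : Option (List ℕ))).getD []))) = h := by
  funext t
  simp [Hfun, Encodable.encodek]

/-- The full analytic relation, before projection. -/
def Dbig : Set ((ℕ → ℕ) × X × (ℕ → ℕ)) :=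
  {p | IsGood (Hfun p.2.2) ∧ ∀ t ∈ Scode p.1, p.2.1 ∈ Cl f (Hfun p.2.2 t)}

/-- The universal-ish analytic set over codes. -/
def Dproj : Set ((ℕ → ℕ) × X) := (fun p : (ℕ → ℕ) × X × (ℕ → ℕ) => (p.1, p.2.1)) '' Dbig f

lemma mem_Dproj (w : ℕ → ℕ) (x : X) : (w, x) ∈ Dproj f ↔ x ∈ Msets f (Scode w) := by
  constructor
  · rintro ⟨⟨w', x', h'⟩, ⟨hgood, hall⟩, heq⟩
    obtain ⟨rfl, rfl⟩ : w' = w ∧ x' = x := by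
      simpa [Prod.ext_iff] using heq
    exact ⟨Hfun h', hgood, hall⟩
  · rintro ⟨h, hgood, hall⟩
    refine ⟨(w, x, fun k => Encodable.encode (h (((Encodable.decode k : Option (List ℕ))).getD []))),
      ⟨?_, ?_⟩, rfl⟩
    · rw [Hfun_lift]; exact hgood
    · rw [Hfun_lift]; exact hall

lemma measurableSet_Dbig : MeasurableSet (Dbig f) := by
  classical
  have hmeas2 : ∀ t : List ℕ,
      Measurable (fun p : (ℕ → ℕ) × X × (ℕ → ℕ) => p.2.2 (Encodable.encode t)) :=
    fun t => (measurable_pi_apply _).comp (measurable_snd.comp measurable_snd)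
  have hmeasw : ∀ n : ℕ, Measurable (fun p : (ℕ → ℕ) × X × (ℕ → ℕ) => p.1 n) :=
    fun n => (measurable_pi_apply n).comp measurable_fst
  have hmeasx : Measurable (fun p : (ℕ → ℕ) × X × (ℕ → ℕ) => p.2.1) :=
    measurable_fst.comp measurable_snd
  have key : Dbig f =
      (⋂ t : List ℕ, {p : (ℕ → ℕ) × X × (ℕ → ℕ) |
        ((Encodable.decode (p.2.2 (Encodable.encode t)) : Option (List ℕ)).getD []).length
          = t.length}) ∩
      ((⋂ t : List ℕ, ⋂ t' : List ℕ, ⋂ _ : t <+: t',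
          {p : (ℕ → ℕ) × X × (ℕ → ℕ) |
            ((Encodable.decode (p.2.2 (Encodable.encode t)) : Option (List ℕ)).getD []) <+:
            ((Encodable.decode (p.2.2 (Encodable.encode t')) : Option (List ℕ)).getD [])}) ∩
       (⋂ t : List ℕ,
          {p : (ℕ → ℕ) × X × (ℕ → ℕ) | ∃ q, q <+: t ∧ p.1 (Encodable.encode q) ≠ 0} ∪
          ⋃ v : List ℕ,
            ({p : (ℕ → ℕ) × X × (ℕ → ℕ) |
              ((Encodable.decode (p.2.2 (Encodable.encode t)) : Option (List ℕ)).getD []) = v}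
              ∩ {p : (ℕ → ℕ) × X × (ℕ → ℕ) | p.2.1 ∈ Cl f v}))) := by
    ext p
    simp only [Dbig, IsGood, Hfun, Scode, mem_setOf_eq, mem_inter_iff, mem_iInter, mem_union,
      mem_iUnion]
    constructor
    · rintro ⟨⟨hlen, hmono⟩, hall⟩
      refine ⟨fun t => hlen t, fun t t' h => hmono t t' h, fun t => ?_⟩
      by_cases hq : ∀ q, q <+: t → p.1 (Encodable.encode q) = 0
      · exact Or.inr ⟨_, ⟨rfl, hall t hq⟩⟩
      · push_neg at hq
        exact Or.inl hq
    · rintro ⟨h1, h2, h3⟩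
      refine ⟨⟨h1, h2⟩, fun t ht => ?_⟩
      rcases h3 t with h | ⟨v, hv, hxv⟩
      · obtain ⟨q, hq, hq'⟩ := h
        exact absurd (ht q hq) hq'
      · rwa [hv]
  rw [key]
  refine MeasurableSet.inter ?_ (MeasurableSet.inter ?_ ?_)
  · refine MeasurableSet.iInter fun t => ?_
    exact (hmeas2 t) ((Set.to_countable
      {n : ℕ | ((Encodable.decode n : Option (List ℕ)).getD []).length = t.length}).measurableSet)
  · refine MeasurableSet.iInter fun t => MeasurableSet.iInter fun t' =>
      MeasurableSet.iInter fun _ => ?_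
    have hpair : Measurable (fun p : (ℕ → ℕ) × X × (ℕ → ℕ) =>
        (p.2.2 (Encodable.encode t), p.2.2 (Encodable.encode t'))) :=
      (hmeas2 t).prodMk (hmeas2 t')
    exact hpair ((Set.to_countable
      {q : ℕ × ℕ | ((Encodable.decode q.1 : Option (List ℕ)).getD []) <+:
        ((Encodable.decode q.2 : Option (List ℕ)).getD [])}).measurableSet)
  · refine MeasurableSet.iInter fun t => MeasurableSet.union ?_ ?_
    · have : {p : (ℕ → ℕ) × X × (ℕ → ℕ) | ∃ q, q <+: t ∧ p.1 (Encodable.encode q) ≠ 0} =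
          ⋃ q : List ℕ, ⋃ _ : q <+: t,
            (fun p : (ℕ → ℕ) × X × (ℕ → ℕ) => p.1 (Encodable.encode q)) ⁻¹' {m | m ≠ 0} := by
        ext p
        simp [mem_iUnion]
      rw [this]
      exact MeasurableSet.iUnion fun q => MeasurableSet.iUnion fun _ =>
        (hmeasw _) ((Set.to_countable _).measurableSet)
    · refine MeasurableSet.iUnion fun v => MeasurableSet.inter ?_ ?_
      · exact (hmeas2 t) ((Set.to_countable
          {n : ℕ | ((Encodable.decode n : Option (List ℕ)).getD []) = v}).measurableSet)
      · exact hmeasx (isClosed_Cl f v).measurableSet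

lemma analyticSet_Dproj [PolishSpace X] : AnalyticSet (Dproj f) := by
  haveI : PolishSpace ((ℕ → ℕ) × X × (ℕ → ℕ)) :=
    inferInstance
  exact (measurableSet_Dbig f).analyticSet.image_of_continuous
    (continuous_fst.prodMk (continuous_fst.comp continuous_snd))

end Space

open Classical in
/-- A canonical code for a tree. -/
noncomputable def codeOf (S : Set (List ℕ)) : ℕ → ℕ :=
  fun k => if ∃ t ∈ S, Encodable.encode t = k then 0 else 1

lemma Scode_codeOf {S : Set (List ℕ)} (hT : IsTree S) : Scode (codeOf S) = S := by
  ext t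
  constructor
  · intro ht
    have := ht t (List.prefix_refl t)
    simp only [codeOf] at this
    split at this
    · rename_i h
      obtain ⟨t', ht', he⟩ := h
      rwa [Encodable.encode_injective he] at ht'
    · exact absurd this one_ne_zero
  · intro ht p hp
    simp only [codeOf]
    rw [if_pos ⟨p, hT t ht p hp, rfl⟩]

/-- The collection of codes of well-founded (i.e. branchless) trees is not
the range of a continuous function on Baire space. -/
lemma no_analytic_wf (f₁ : (ℕ → ℕ) → (ℕ → ℕ)) (f₁c : Continuous f₁)
    (hr : range f₁ = {w : ℕ → ℕ | ¬ HasBranch (Scode w)}) : False := by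
  classical
  let E := Denumerable.eqv (ℕ × ℕ × ℕ)
  let nmap : List ℕ → List ℕ := fun l => l.map fun c => (E.symm c).1
  let Tstar : Set (List ℕ) := {l | ∃ g : ℕ → ℕ,
    (∀ i < l.length, (E.symm (l.getD i 0)).2.1 = f₁ g i ∧ (E.symm (l.getD i 0)).2.2 = g i) ∧
    nmap l ∈ Scode (f₁ g)}
  -- `Tstar` is a tree
  have hTtree : IsTree Tstar := by
    rintro t ⟨g, hcomp, hmem⟩ p hp
    refine ⟨g, fun i hi => ?_, ?_⟩
    · rw [getD_of_prefix hp hi]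
      exact hcomp i (lt_of_lt_of_le hi hp.length_le)
    · exact isTree_Scode (f₁ g) _ hmem _ (hp.map _)
  -- `Tstar` has no branch
  have hnb : ¬ HasBranch Tstar := by
    rintro ⟨ζ, hζ⟩
    choose gs hgs1 hgs2 using hζ
    set glim : ℕ → ℕ := fun i => (E.symm (ζ i)).2.2 with hglim
    set w' : ℕ → ℕ := fun i => (E.symm (ζ i)).2.1 with hw'
    set z : ℕ → ℕ := fun i => (E.symm (ζ i)).1 with hz
    have hcomp : ∀ K i, i < K → w' i = f₁ (gs K) i ∧ glim i = gs K i := by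
      intro K i hi
      have := hgs1 K i (by simpa [seg_length] using hi)
      rwa [seg_getD ζ hi] at this
    have key : ∀ i : ℕ, ∃ K0, ∀ K ≥ K0, f₁ (gs K) i = f₁ glim i := by
      intro i
      have hopen : IsOpen (f₁ ⁻¹' {v : ℕ → ℕ | v i = f₁ glim i}) := by
        refine f₁c.isOpen_preimage _ ?_
        have : {v : ℕ → ℕ | v i = f₁ glim i} =
            (fun v : ℕ → ℕ => v i) ⁻¹' {f₁ glim i} := rfl
        rw [this]
        exact (continuous_apply i).isOpen_preimage _ (isOpen_discrete _)
      obtain ⟨K0, hK0⟩ := exists_cyl_subset hopen (show glim ∈ _ from rfl)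
      refine ⟨K0, fun K hK => ?_⟩
      have hmem : gs K ∈ cyl (seg glim K0) := by
        show seg (gs K) (seg glim K0).length = seg glim K0
        rw [seg_length]
        apply List.ext_getElem (by simp [seg_length])
        intro j h1 h2
        rw [seg_getElem, seg_getElem]
        have hjK : j < K := lt_of_lt_of_le (by simpa [seg_length] using h1) hK
        exact ((hcomp K j hjK).2).symm
      exact hK0 hmem
    have hlim : f₁ glim = w' := by
      funext i
      obtain ⟨K0, hK0⟩ := key i
      have h1 := hK0 (max K0 (i + 1)) (le_max_left _ _)
      have h2 := (hcomp (max K0 (i + 1)) i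
        (lt_of_lt_of_le (Nat.lt_succ_self i) (le_max_right _ _))).1
      rw [← h1, ← h2]
    have hw'WF : ¬ HasBranch (Scode w') := by
      have : w' ∈ range f₁ := ⟨glim, hlim⟩
      rwa [hr] at this
    apply hw'WF
    refine ⟨z, fun k => ?_⟩
    intro p hp
    obtain ⟨K0, hK0⟩ := key (Encodable.encode p)
    set K := max k K0 with hK
    have hmemK : seg z K ∈ Scode (f₁ (gs K)) := by
      have := hgs2 K
      have hmap : nmap (seg ζ K) = seg z K := by
        show (seg ζ K).map _ = _
        rw [seg_map]
        rfl
      rwa [hmap] at this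
    have hpK : p <+: seg z K := hp.trans (seg_prefix z (le_max_left _ _))
    have := hmemK p hpK
    rw [hK0 K (le_max_right _ _), hlim] at this
    exact this
  -- the empty list is in `Tstar`
  have hnil : [] ∈ Tstar := by
    have htree1 : IsTree {([] : List ℕ)} := by
      rintro t ht p hp
      simp only [mem_singleton_iff] at ht ⊢
      subst ht
      exact List.prefix_nil.1 hp
    have hnb1 : ¬ HasBranch {([] : List ℕ)} := by
      rintro ⟨z, hz⟩
      have := hz 1
      simp only [mem_singleton_iff] at this
      have := congrArg List.length this
      simp [seg_length] at this
    have : codeOf {([] : List ℕ)} ∈ range f₁ := by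
      rw [hr]
      show ¬ HasBranch (Scode (codeOf {([] : List ℕ)}))
      rwa [Scode_codeOf htree1]
    obtain ⟨g0, hg0⟩ := this
    refine ⟨g0, fun i hi => absurd hi (by simp), ?_⟩
    show nmap [] ∈ Scode (f₁ g0)
    rw [hg0, Scode_codeOf htree1]
    rfl
  -- every coded branchless tree embeds into `Tstar`
  have hemb : ∀ w ∈ range f₁, ∃ h : List ℕ → List ℕ,
      IsGood h ∧ ∀ t ∈ Scode w, h t ∈ Tstar := by
    rintro w ⟨g, hg⟩
    refine ⟨fun t => seg (fun i => E (t.getD i 0, w i, g i)) t.length,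
      ⟨fun t => seg_length _ _, ?_⟩, ?_⟩
    · intro t t' htt'
      show seg (fun i => E (t.getD i 0, w i, g i)) t.length <+:
        seg (fun i => E (t'.getD i 0, w i, g i)) t'.length
      have heq : seg (fun i => E (t.getD i 0, w i, g i)) t.length =
          (seg (fun i => E (t'.getD i 0, w i, g i)) t'.length).take t.length := by
        apply List.ext_getElem
        · simp only [seg_length, List.length_take]
          exact (Nat.min_eq_left htt'.length_le).symm
        · intro j h1 h2
          rw [List.getElem_take, seg_getElem, seg_getElem]
          have hj : j < t.length := by simpa [seg_length] using h1
          rw [getD_of_prefix htt' hj]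
      rw [heq]
      exact List.take_prefix _ _
    · intro t ht
      show seg (fun i => E (t.getD i 0, w i, g i)) t.length ∈ Tstar
      refine ⟨g, fun i hi => ?_, ?_⟩
      · have hi' : i < t.length := by simpa [seg_length] using hi
        rw [seg_getD _ hi', Equiv.symm_apply_apply]
        exact ⟨by rw [hg], rfl⟩
      · have hmap : nmap (seg (fun i => E (t.getD i 0, w i, g i)) t.length) = t := by
          show (seg _ t.length).map _ = t
          rw [seg_map]
          apply List.ext_getElem (by simp [seg_length])
          intro j h1 h2
          have hj : j < t.length := by simpa [seg_length] using h1
          rw [seg_getElem]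
          show (E.symm (E (t.getD j 0, w j, g j))).1 = t[j]
          rw [Equiv.symm_apply_apply]
          exact List.getD_eq_getElem t 0 hj
        rw [hmap, hg]
        exact ht
  -- the shifted tree
  let S' : Set (List ℕ) := insert [] {l | ∃ t ∈ Tstar, l = 0 :: t}
  have hS'tree : IsTree S' := by
    rintro t ht p hp
    rcases ht with rfl | ⟨t', ht', rfl⟩
    · left
      exact List.prefix_nil.1 hp
    · rcases p with _ | ⟨a, p'⟩
      · left; rfl
      · obtain ⟨rfl, hp'⟩ := List.cons_prefix_cons.1 hp
        exact Or.inr ⟨p', hTtree _ ht' _ hp', rfl⟩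
  have hS'nb : ¬ HasBranch S' := by
    rintro ⟨zb, hzb⟩
    apply hnb
    refine ⟨fun i => zb (i + 1), fun k => ?_⟩
    have := hzb (k + 1)
    rw [seg_mono_cons] at this
    rcases this with h | ⟨t', ht', heq⟩
    · exact absurd (congrArg List.length h) (by simp)
    · obtain ⟨-, rfl⟩ : zb 0 = 0 ∧ seg (fun i => zb (i + 1)) k = t' := by
        have := List.cons.injEq (zb 0) (seg (fun i => zb (i+1)) k) 0 t' ▸ heq
        exact ⟨(List.cons.inj heq).1, (List.cons.inj heq).2⟩
      exact ht'
  -- its code is a branchless code, hence embeds into Tstar; derive a branch of Tstar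
  have hwstar : codeOf S' ∈ range f₁ := by
    rw [hr]
    show ¬ HasBranch (Scode (codeOf S'))
    rwa [Scode_codeOf hS'tree]
  obtain ⟨h, ⟨hlen, hmono⟩, hmaps⟩ := hemb (codeOf S') hwstar
  have hmaps' : ∀ t ∈ S', h t ∈ Tstar := by
    intro t ht
    exact hmaps t (by rwa [Scode_codeOf hS'tree])
  -- iterate
  let u : ℕ → List ℕ := fun k => (fun l => h (0 :: l))^[k] []
  have hu_succ : ∀ k, u (k + 1) = h (0 :: u k) := fun k => Function.iterate_succ_apply' _ _ _
  have hu_mem : ∀ k, u k ∈ Tstar := by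
    intro k
    induction k with
    | zero => exact hnil
    | succ n ih =>
      rw [hu_succ]
      exact hmaps' _ (Or.inr ⟨u n, ih, rfl⟩)
  have hu_len : ∀ k, (u k).length = k := by
    intro k
    induction k with
    | zero => rfl
    | succ n ih => rw [hu_succ, hlen]; simp [ih]
  have hu_mono : ∀ k, u k <+: u (k + 1) := by
    intro k
    induction k with
    | zero => exact List.nil_prefix
    | succ n ih =>
      rw [hu_succ, hu_succ]
      exact hmono _ _ (List.cons_prefix_cons.2 ⟨rfl, ih⟩)
  obtain ⟨zb, hzb⟩ := exists_branch_of_chain u hu_mono (fun k => le_of_eq (hu_len k).symm)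
  apply hnb
  refine ⟨zb, fun k => ?_⟩
  have : seg zb k = u k := (hzb k).eq_of_length (by rw [seg_length, hu_len])
  rw [this]
  exact hu_mem k

end FirstRefl

open FirstRefl Set

/-- First Reflection Theorem: if `Φ` is a `Π¹₁ on Σ¹₁` collection of subsets
of a Polish space `X`, then every analytic `A ∈ Φ` has a Borel superset
`B ∈ Φ`. -/
theorem stmt2 {X : Type} [TopologicalSpace X] [PolishSpace X]
    [MeasurableSpace X] [BorelSpace X]
    (Φ : Set (Set X))
    (hΦ : ∀ (Y : Type) [TopologicalSpace Y] [PolishSpace Y] (A : Set (Y × X)),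
      AnalyticSet A → AnalyticSet {y | {x | (y, x) ∈ A} ∈ Φ}ᶜ)
    (A : Set X) (hA : AnalyticSet A) (hAΦ : A ∈ Φ) :
    ∃ B : Set X, MeasurableSet B ∧ A ⊆ B ∧ B ∈ Φ := by
  classical
  rw [AnalyticSet] at hA
  rcases hA with rfl | ⟨f, fc, rfl⟩
  · exact ⟨∅, MeasurableSet.empty, subset_rfl, hAΦ⟩
  by_contra hcon
  push_neg at hcon
  have hD := hΦ (ℕ → ℕ) (Dproj f) (analyticSet_Dproj f)
  have hsec : ∀ w : ℕ → ℕ, {x | (w, x) ∈ Dproj f} = Msets f (Scode w) := by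
    intro w
    ext x
    exact mem_Dproj f w x
  have hWFeq : {y : ℕ → ℕ | {x | (y, x) ∈ Dproj f} ∈ Φ}ᶜ
      = {w : ℕ → ℕ | ¬ HasBranch (Scode w)} := by
    ext w
    simp only [Set.mem_compl_iff, Set.mem_setOf_eq, hsec]
    constructor
    · intro hw hbr
      apply hw
      have : Msets f (Scode w) = range f :=
        subset_antisymm (Msets_subset_range f fc hbr) (range_subset_Msets f fc _)
      rw [this]
      exact hAΦ
    · intro hnb hmem
      exact hcon _ (measurableSet_Msets f (isTree_Scode w) hnb)
        (range_subset_Msets f fc _) hmem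
  rw [hWFeq] at hD
  rw [AnalyticSet] at hD
  have hw0 : codeOf ∅ ∈ {w : ℕ → ℕ | ¬ HasBranch (Scode w)} := by
    have htree : IsTree (∅ : Set (List ℕ)) := fun t ht => absurd ht (Set.notMem_empty t)
    show ¬ HasBranch (Scode (codeOf ∅))
    rw [Scode_codeOf htree]
    rintro ⟨z, hz⟩
    exact Set.notMem_empty _ (hz 0)
  rcases hD with hD | ⟨f₁, f₁c, hf₁⟩
  · rw [hD] at hw0
    exact Set.notMem_empty _ hw0
  · exact no_analytic_wf f₁ f₁c hf₁
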